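/- arXiv:2511.13680 — 2 statements merged into one kernel-verified Lean document; each statement's English description precedes it below -/
import Mathlib

section
/- Under the condition ε ≥ max_t max_τ ‖θ*_t − θ̂_τ‖, the cross-learning error E_CL(ε) = (1/T)∑_t ‖θ†_t − θ*_t‖² is at most the separable error E_S = (1/T)∑_t ‖θ̂_t − θ*_t‖², where θ†_t is the projection of θ̂_t onto the ball B(θ†_g, ε). -/
/-- Euclidean projection onto the closed ball of center `c` and radius `ε`. -/
noncomputable def projBall {d : ℕ} (c : EuclideanSpace ℝ (Fin d)) (ε : ℝ)
    (x : EuclideanSpace ℝ (Fin d)) : EuclideanSpace ℝ (Fin d) :=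
  if ‖x - c‖ ≤ ε then x else c + (ε / ‖x - c‖) • (x - c)

lemma projBall_nonexpansive {d : ℕ} (c : EuclideanSpace ℝ (Fin d)) (ε : ℝ)
    (x y : EuclideanSpace ℝ (Fin d)) (hy : ‖y - c‖ ≤ ε) :
    ‖projBall c ε x - y‖ ≤ ‖x - y‖ := by
  unfold projBall
  split_ifs with h
  · exact le_refl _
  · push_neg at h
    set u := x - c with hu
    set v := y - c with hv
    have hv0 : (0:ℝ) ≤ ‖v‖ := norm_nonneg _
    have hε0 : (0:ℝ) ≤ ε := le_trans hv0 hy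
    have hr : (0:ℝ) < ‖u‖ := lt_of_le_of_lt hε0 h
    have key : ‖(ε / ‖u‖) • u - v‖ ^ 2 ≤ ‖u - v‖ ^ 2 := by
      have e1 : ‖(ε / ‖u‖) • u - v‖ ^ 2
          = ‖(ε / ‖u‖) • u‖ ^ 2 - 2 * inner ℝ ((ε / ‖u‖) • u) v + ‖v‖ ^ 2 := by
        rw [@norm_sub_sq_real]
      have e2 : ‖u - v‖ ^ 2 = ‖u‖ ^ 2 - 2 * inner ℝ u v + ‖v‖ ^ 2 := by
        rw [@norm_sub_sq_real]
      rw [e1, e2, norm_smul, real_inner_smul_left]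
      have hiv : inner ℝ u v ≤ ‖u‖ * ‖v‖ := real_inner_le_norm u v
      have habs : ‖ε / ‖u‖‖ = ε / ‖u‖ := by
        rw [Real.norm_eq_abs, abs_of_nonneg (div_nonneg hε0 hr.le)]
      rw [habs]
      have hdiv : (ε / ‖u‖) * ‖u‖ = ε := div_mul_cancel₀ ε hr.ne'
      have hiv2 : inner ℝ u v ≤ ‖u‖ * ε :=
        le_trans hiv (mul_le_mul_of_nonneg_left hy (norm_nonneg u))
      have ht1 : ε / ‖u‖ < 1 := (div_lt_one hr).2 h
      nlinarith [hdiv, hiv2, sq_nonneg (‖u‖ - ε),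
        mul_nonneg (sub_nonneg.2 ht1.le) (sub_nonneg.2 hiv2)]
    have : ‖c + (ε / ‖u‖) • u - y‖ = ‖(ε / ‖u‖) • u - v‖ := by
      congr 1
      simp [hv]
      abel
    have hxy : ‖x - y‖ = ‖u - v‖ := by rw [hu, hv]; congr 1; abel
    rw [this, hxy]
    exact (pow_le_pow_iff_left₀ (norm_nonneg _) (norm_nonneg _) two_ne_zero).1 key

/-- if `ε ≥ max_t max_τ ‖θ*_t − θ̂_τ‖`, the cross-learning error is at most
the separable error. -/
theorem stmt_6 {d : ℕ} (T : ℕ) (hT : 0 < T) (ε : ℝ)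
    (θstar θhat θdag : Fin T → EuclideanSpace ℝ (Fin d))
    (hε : ∀ t τ, ‖θstar t - θhat τ‖ ≤ ε)
    (γ : Fin T → ℝ) (hγ0 : ∀ τ, 0 ≤ γ τ) (hγ1 : ∑ τ, γ τ = 1)
    (θg : EuclideanSpace ℝ (Fin d)) (hθg : θg = ∑ τ, γ τ • θhat τ)
    (hθdag : ∀ t, θdag t = projBall θg ε (θhat t)) :
    (T : ℝ)⁻¹ * ∑ t, ‖θdag t - θstar t‖ ^ 2 ≤
      (T : ℝ)⁻¹ * ∑ t, ‖θhat t - θstar t‖ ^ 2 := by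
  have hstar : ∀ t, ‖θstar t - θg‖ ≤ ε := by
    intro t
    have : θstar t - θg = ∑ τ, γ τ • (θstar t - θhat τ) := by
      simp only [hθg, smul_sub, Finset.sum_sub_distrib, ← Finset.sum_smul, hγ1, one_smul]
    rw [this]
    calc ‖∑ τ, γ τ • (θstar t - θhat τ)‖ ≤ ∑ τ, ‖γ τ • (θstar t - θhat τ)‖ :=
          norm_sum_le _ _
      _ ≤ ∑ τ : Fin T, γ τ * ε := by
          apply Finset.sum_le_sum
          intro τ _
          rw [norm_smul, Real.norm_eq_abs, abs_of_nonneg (hγ0 τ)]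
          exact mul_le_mul_of_nonneg_left (hε t τ) (hγ0 τ)
      _ = ε := by rw [← Finset.sum_mul, hγ1, one_mul]
  apply mul_le_mul_of_nonneg_left _ (by positivity)
  apply Finset.sum_le_sum
  intro t _
  have h1 : ‖θdag t - θstar t‖ ≤ ‖θhat t - θstar t‖ := by
    rw [hθdag t]
    exact projBall_nonexpansive θg ε (θhat t) (θstar t) (hstar t)
  exact pow_le_pow_left₀ (norm_nonneg _) h1 2
end

section
/- Let v ~ N(0, σ²I_d) be a standard isotropic Gaussian in ℝ^d (d ≥ 2), let m ∈ ℝ^d with m ≠ 0, and define u = (m + v)/‖m + v‖. Then E[u] = a·m for some strictly positive scalar a > 0. -/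
open MeasureTheory

/-- The isotropic Gaussian measure `N(0, s²·I)` on `ℝ^d`, given by its density with
respect to Lebesgue measure. -/
noncomputable def isoGaussian (d : ℕ) (s2 : ℝ) :
    Measure (EuclideanSpace ℝ (Fin d)) :=
  volume.withDensity fun v => ENNReal.ofReal
    ((2 * Real.pi * s2) ^ (-(d : ℝ) / 2) * Real.exp (-‖v‖ ^ 2 / (2 * s2)))

/-- Arithmetic core: positivity of the symmetrized inner-product term. -/
lemma stmt11_arith {u n c A B : ℝ} (hu : 0 < u) (hA : 0 < A) (hB : 0 < B)
    (hA2 : A ^ 2 = u + 2 * c + n) (hB2 : B ^ 2 = u - 2 * c + n)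
    (hcs : c ^ 2 < u * n) :
    0 < A⁻¹ * (u + c) + B⁻¹ * (u - c) := by
  have key : 0 < (u + c) * B + (u - c) * A := by
    rcases le_or_gt c 0 with hc | hc
    · have h1 : 0 < (u - c) * A := mul_pos (by linarith) hA
      rcases le_or_gt 0 (u + c) with h2 | h2
      · nlinarith [mul_nonneg h2 hB.le]
      · have hc' : c < 0 := by linarith
        have hid : ((u - c) * A) ^ 2 - (-(u + c) * B) ^ 2 = (-4 * c) * (u * n - c ^ 2) := by
          rw [mul_pow, mul_pow, hA2, hB2]; ring
        have hrhs : 0 < (-4 * c) * (u * n - c ^ 2) :=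
          mul_pos (by linarith) (by linarith)
        have hsq : (-(u + c) * B) ^ 2 < ((u - c) * A) ^ 2 := by linarith
        have := lt_of_pow_lt_pow_left₀ 2 h1.le hsq
        nlinarith [this]
    · have h1 : 0 < (u + c) * B := mul_pos (by linarith) hB
      rcases le_or_gt 0 (u - c) with h2 | h2
      · nlinarith [mul_nonneg h2 hA.le]
      · have hid : ((u + c) * B) ^ 2 - (-(u - c) * A) ^ 2 = (4 * c) * (u * n - c ^ 2) := by
          rw [mul_pow, mul_pow, hA2, hB2]; ring
        have hrhs : 0 < (4 * c) * (u * n - c ^ 2) :=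
          mul_pos (by linarith) (by linarith)
        have hsq : (-(u - c) * A) ^ 2 < ((u + c) * B) ^ 2 := by linarith
        have := lt_of_pow_lt_pow_left₀ 2 h1.le hsq
        nlinarith [this]
  have heq : A⁻¹ * (u + c) + B⁻¹ * (u - c) = ((u + c) * B + (u - c) * A) / (A * B) := by
    field_simp
  rw [heq]
  positivity

/-- for `v ~ N(0, σ²I)` in `ℝ^d` (`d ≥ 2`) and `m ≠ 0`, the expectation of
the unit vector `(m+v)/‖m+v‖` equals `a·m` for some strictly positive scalar `a`. -/
theorem stmt_11 (d : ℕ) (hd : 2 ≤ d) (σ : ℝ) (hσ : 0 < σ)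
    (m : EuclideanSpace ℝ (Fin d)) (hm : m ≠ 0) :
    ∃ a : ℝ, 0 < a ∧
      (∫ v, ‖m + v‖⁻¹ • (m + v) ∂(isoGaussian d (σ ^ 2))) = a • m := by
  classical
  have hs2 : 0 < σ ^ 2 := by positivity
  set mu := isoGaussian d (σ ^ 2) with hmu
  set g : EuclideanSpace ℝ (Fin d) → ℝ :=
    fun v => (2 * Real.pi * σ ^ 2) ^ (-(d : ℝ) / 2) * Real.exp (-‖v‖ ^ 2 / (2 * σ ^ 2))
    with hgdef
  have hmu' : mu = volume.withDensity fun v => ENNReal.ofReal (g v) := rfl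
  have hgpos : ∀ v, 0 < g v := by
    intro v
    have h1 : (0:ℝ) < (2 * Real.pi * σ ^ 2) ^ (-(d : ℝ) / 2) :=
      Real.rpow_pos_of_pos (by positivity) _
    positivity
  have hgcont : Continuous g := by
    apply continuous_const.mul
    apply Real.continuous_exp.comp
    fun_prop
  -- integrability of the density
  have hb : (0:ℝ) < (2 * σ ^ 2)⁻¹ := by positivity
  have h1 := GaussianFourier.integrable_cexp_neg_mul_sq_norm_add
    (b := (((2 * σ ^ 2)⁻¹ : ℝ) : ℂ)) (by simp only [Complex.ofReal_re]; exact hb) 0 (0 : EuclideanSpace ℝ (Fin d))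
  have h2 : Integrable (fun v : EuclideanSpace ℝ (Fin d) =>
      Real.exp (-‖v‖ ^ 2 / (2 * σ ^ 2))) := by
    refine h1.norm.congr (Filter.Eventually.of_forall fun v => ?_)
    simp only [zero_mul, add_zero, Complex.norm_exp]
    congr 1
    rw [show (-((((2 * σ ^ 2)⁻¹ : ℝ)) : ℂ) * (‖v‖ : ℂ) ^ 2)
        = (((-(2 * σ ^ 2)⁻¹ * ‖v‖ ^ 2 : ℝ)) : ℂ) by push_cast; ring,
      Complex.ofReal_re]
    ring
  have hint_g : Integrable g := by
    simpa [hgdef] using h2.const_mul ((2 * Real.pi * σ ^ 2) ^ (-(d : ℝ) / 2))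
  haveI hfin : IsFiniteMeasure mu := by
    constructor
    rw [hmu', withDensity_apply _ MeasurableSet.univ, setLIntegral_univ]
    exact lt_top_iff_ne_top.2
      ((lintegral_ofReal_ne_top_iff_integrable hgcont.aestronglyMeasurable
        (Filter.Eventually.of_forall fun v => (hgpos v).le)).mpr hint_g)
  -- every linear isometry preserves mu
  have key_pres : ∀ (L : EuclideanSpace ℝ (Fin d) ≃ₗᵢ[ℝ] EuclideanSpace ℝ (Fin d)),
      MeasurePreserving L mu mu := by
    intro L
    refine ⟨L.continuous.measurable, ?_⟩
    rw [hmu']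
    ext s hs
    rw [Measure.map_apply L.continuous.measurable hs,
        withDensity_apply _ (hs.preimage L.continuous.measurable), withDensity_apply _ hs]
    have hgL : ∀ x, ENNReal.ofReal (g x) = ENNReal.ofReal (g (L x)) := by
      intro x; simp [hgdef, L.norm_map]
    calc ∫⁻ x in L ⁻¹' s, ENNReal.ofReal (g x) ∂volume
        = ∫⁻ x in L ⁻¹' s, ENNReal.ofReal (g (L x)) ∂volume := by
          exact lintegral_congr fun x => hgL x
      _ = ∫⁻ y in s, ENNReal.ofReal (g y) ∂volume := by
          exact L.measurePreserving.setLIntegral_comp_preimage_emb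
            (L.toHomeomorph.measurableEmbedding) (fun y => ENNReal.ofReal (g y)) s
  -- the integrand
  set F : EuclideanSpace ℝ (Fin d) → EuclideanSpace ℝ (Fin d) :=
    fun v => ‖m + v‖⁻¹ • (m + v) with hFdef
  have hFmeas : Measurable F := by
    have hadd : Measurable fun v : EuclideanSpace ℝ (Fin d) => m + v :=
      measurable_const.add measurable_id
    exact (hadd.norm.inv).smul hadd
  have hFint : Integrable F mu := by
    refine ⟨hFmeas.aestronglyMeasurable,
      HasFiniteIntegral.of_bounded (C := 1) (Filter.Eventually.of_forall fun v => ?_)⟩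
    by_cases h : m + v = 0
    · simp [hFdef, h]
    · have hn : ‖m + v‖ ≠ 0 := norm_ne_zero_iff.2 h
      simp only [hFdef, norm_smul, norm_inv, norm_norm]
      rw [inv_mul_cancel₀ hn]
  -- the subspace and reflections
  set K : Submodule ℝ (EuclideanSpace ℝ (Fin d)) := ℝ ∙ m with hKdef
  have hmK : m ∈ K := Submodule.mem_span_singleton_self m
  set R := K.reflection with hRdef
  set S := Kᗮ.reflection with hSdef
  have hRm : R m = m := K.reflection_mem_subspace_eq_self hmK
  have hSm : S m = -m := K.reflection_mem_subspace_orthogonal_precomplement_eq_neg hmK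
  -- colinearity
  have hRF : ∀ v, R (F v) = F (R v) := by
    intro v
    have h1 : m + R v = R (m + v) := by rw [map_add, hRm]
    simp only [hFdef]
    rw [h1, R.norm_map]
    exact _root_.map_smul R _ _
  have hRI : R (∫ v, F v ∂mu) = ∫ v, F v ∂mu := by
    have h1 : R (∫ v, F v ∂mu) = ∫ v, R (F v) ∂mu :=
      (ContinuousLinearMap.integral_comp_comm
        (R.toContinuousLinearEquiv : EuclideanSpace ℝ (Fin d) →L[ℝ] EuclideanSpace ℝ (Fin d))
        hFint).symm
    rw [h1]
    simp_rw [hRF]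
    exact (key_pres R).integral_comp (R.toHomeomorph.measurableEmbedding) F
  have hIK : (∫ v, F v ∂mu) ∈ K := (K.reflection_eq_self_iff _).mp hRI
  obtain ⟨a, ha⟩ := Submodule.mem_span_singleton.mp hIK
  -- the scalar integrand
  set φ : EuclideanSpace ℝ (Fin d) → ℝ := fun v => inner ℝ m (F v) with hφdef
  have hφint : Integrable φ mu := (innerSL ℝ m).integrable_comp hFint
  have hSemb : MeasurableEmbedding (S : EuclideanSpace ℝ (Fin d) → EuclideanSpace ℝ (Fin d)) :=
    S.toHomeomorph.measurableEmbedding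
  have hφSint : Integrable (fun v => φ (S v)) mu := by
    have h0 : Integrable (φ ∘ (S : EuclideanSpace ℝ (Fin d) → EuclideanSpace ℝ (Fin d))) mu :=
      ((key_pres S).integrable_comp_emb hSemb).mpr hφint
    exact h0
  have hintS : ∫ v, φ (S v) ∂mu = ∫ v, φ v ∂mu := (key_pres S).integral_comp hSemb φ
  have hinner : ∫ v, φ v ∂mu = inner ℝ m (∫ v, F v ∂mu) := integral_inner hFint m
  -- pointwise positivity off K
  have hpos : ∀ v, v ∉ K → 0 < φ v + φ (S v) := by
    intro v hv
    have hu : (0:ℝ) < ‖m‖ ^ 2 := by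
      have := norm_pos_iff.2 hm
      positivity
    have hinnS : (inner ℝ m (S v) : ℝ) = -(inner ℝ m v : ℝ) := by
      have h1 : (inner ℝ (S m) (S v) : ℝ) = inner ℝ m v := S.inner_map_map m v
      rw [hSm, inner_neg_left] at h1
      linarith
    have hnSv : ‖S v‖ = ‖v‖ := S.norm_map v
    have hA : 0 < ‖m + v‖ := by
      rw [norm_pos_iff]
      intro h
      exact hv (by rw [eq_neg_of_add_eq_zero_right h]; exact K.neg_mem hmK)
    have hB : 0 < ‖m + S v‖ := by
      rw [norm_pos_iff]
      intro h
      apply hv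
      have h1 : S v = -m := eq_neg_of_add_eq_zero_right h
      have h2 : v = S (S v) := (Submodule.reflection_reflection _ v).symm
      rw [h1, map_neg, hSm, neg_neg] at h2
      rw [h2]; exact hmK
    have hA2 : ‖m + v‖ ^ 2 = ‖m‖ ^ 2 + 2 * inner ℝ m v + ‖v‖ ^ 2 := norm_add_sq_real m v
    have hB2 : ‖m + S v‖ ^ 2 = ‖m‖ ^ 2 - 2 * inner ℝ m v + ‖v‖ ^ 2 := by
      rw [norm_add_sq_real, hinnS, hnSv]; ring
    have hvK : ∀ t : ℝ, v ≠ t • m := by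
      intro t h
      exact hv (h ▸ K.smul_mem t hmK)
    have hm0 : ‖m‖ ≠ 0 := norm_ne_zero_iff.2 hm
    have hcs : (inner ℝ m v : ℝ) ^ 2 < ‖m‖ ^ 2 * ‖v‖ ^ 2 := by
      have h1 : (inner ℝ m v : ℝ) < ‖m‖ * ‖v‖ := by
        rw [inner_lt_norm_mul_iff_real]
        intro h
        apply hvK (‖m‖⁻¹ * ‖v‖)
        have h' := congrArg (fun x => (‖m‖⁻¹ : ℝ) • x) h
        simp only [smul_smul, inv_mul_cancel₀ hm0, one_smul] at h'
        exact h'.symm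
      have h2 : (inner ℝ m (-v) : ℝ) < ‖m‖ * ‖-v‖ := by
        rw [inner_lt_norm_mul_iff_real]
        intro h
        apply hvK (-(‖m‖⁻¹ * ‖v‖))
        have h' := congrArg (fun x => (‖m‖⁻¹ : ℝ) • x) h
        simp only [smul_smul, inv_mul_cancel₀ hm0, one_smul, norm_neg] at h'
        rw [neg_smul, h']
        exact (neg_neg v).symm
      rw [inner_neg_right, norm_neg] at h2
      have habs : |(inner ℝ m v : ℝ)| < ‖m‖ * ‖v‖ := abs_lt.2 ⟨by linarith, h1⟩
      calc (inner ℝ m v : ℝ) ^ 2 = |(inner ℝ m v : ℝ)| ^ 2 := (sq_abs _).symm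
        _ < (‖m‖ * ‖v‖) ^ 2 := by
            apply pow_lt_pow_left₀ habs (abs_nonneg _)
            norm_num
        _ = ‖m‖ ^ 2 * ‖v‖ ^ 2 := by ring
    have hφv : φ v = ‖m + v‖⁻¹ * (‖m‖ ^ 2 + inner ℝ m v) := by
      simp only [hφdef, hFdef, real_inner_smul_right, inner_add_right,
        real_inner_self_eq_norm_sq]
    have hφS : φ (S v) = ‖m + S v‖⁻¹ * (‖m‖ ^ 2 - inner ℝ m v) := by
      simp only [hφdef, hFdef, real_inner_smul_right, inner_add_right,
        real_inner_self_eq_norm_sq, hinnS]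
      ring
    rw [hφv, hφS]
    exact stmt11_arith hu hA hB hA2 hB2 hcs
  -- K is a null set
  have hKne : K ≠ ⊤ := by
    intro h
    have h1 : Module.finrank ℝ K = 1 := finrank_span_singleton hm
    rw [h, finrank_top] at h1
    rw [finrank_euclideanSpace_fin] at h1
    omega
  have hKnull : mu (K : Set (EuclideanSpace ℝ (Fin d))) = 0 := by
    rw [hmu']
    exact (withDensity_absolutelyContinuous volume _)
      (Measure.addHaar_submodule volume K hKne)
  have hKc : ∀ᵐ v ∂mu, v ∉ (K : Set (EuclideanSpace ℝ (Fin d))) := by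
    rw [ae_iff]
    simpa using hKnull
  -- positivity of the integral
  set h : EuclideanSpace ℝ (Fin d) → ℝ := fun v => φ v + φ (S v) with hhdef
  have hh_nonneg : 0 ≤ᵐ[mu] h := by
    filter_upwards [hKc] with v hv
    exact (hpos v hv).le
  have hh_int : Integrable h mu := hφint.add hφSint
  have hsupp_sub : (K : Set (EuclideanSpace ℝ (Fin d)))ᶜ ⊆ Function.support h :=
    fun v hv => ne_of_gt (hpos v hv)
  have hKc_pos : 0 < mu ((K : Set (EuclideanSpace ℝ (Fin d)))ᶜ) := by
    rcases (zero_le : (0 : ENNReal) ≤ mu ((K : Set (EuclideanSpace ℝ (Fin d)))ᶜ)).lt_or_eq with h0 | h0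
    · exact h0
    · exfalso
      have huniv : mu Set.univ = 0 := by
        have : mu Set.univ ≤ mu (K : Set (EuclideanSpace ℝ (Fin d))) +
            mu ((K : Set (EuclideanSpace ℝ (Fin d)))ᶜ) := by
          rw [← Set.union_compl_self (K : Set (EuclideanSpace ℝ (Fin d)))]
          exact measure_union_le _ _
        rw [hKnull, ← h0, add_zero] at this
        exact le_antisymm this zero_le
      have hunivpos : 0 < mu Set.univ := by
        rw [hmu', withDensity_apply _ MeasurableSet.univ, setLIntegral_univ]
        have : 0 < ∫⁻ v, ENNReal.ofReal (g v) ∂volume := by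
          rw [lintegral_pos_iff_support
            (show Measurable fun v : EuclideanSpace ℝ (Fin d) => ENNReal.ofReal (g v) from
              ENNReal.measurable_ofReal.comp hgcont.measurable)]
          have hsupp : Function.support (fun v => ENNReal.ofReal (g v)) = Set.univ := by
            ext v
            simp only [Function.mem_support, Set.mem_univ, iff_true]
            exact (ENNReal.ofReal_pos.2 (hgpos v)).ne'
          rw [hsupp]
          have : (volume : Measure (EuclideanSpace ℝ (Fin d))) Set.univ ≠ 0 := by
            have := isOpen_univ.measure_pos (volume : Measure (EuclideanSpace ℝ (Fin d)))
              ⟨0, trivial⟩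
            exact this.ne'
          exact pos_iff_ne_zero.2 this
        exact this
      rw [huniv] at hunivpos
      exact lt_irrefl _ hunivpos
  have hsupp_pos : 0 < mu (Function.support h) :=
    lt_of_lt_of_le hKc_pos (measure_mono hsupp_sub)
  have hint_pos : 0 < ∫ v, h v ∂mu :=
    (integral_pos_iff_support_of_nonneg_ae hh_nonneg hh_int).2 hsupp_pos
  have hsum : ∫ v, h v ∂mu = 2 * inner ℝ m (∫ v, F v ∂mu) := by
    simp only [hhdef]
    rw [integral_add hφint hφSint, hintS, hinner]
    ring
  have hmI : (0:ℝ) < inner ℝ m (∫ v, F v ∂mu) := by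
    rw [hsum] at hint_pos
    linarith
  refine ⟨a, ?_, ha.symm⟩
  have hval : (inner ℝ m (∫ v, F v ∂mu) : ℝ) = a * ‖m‖ ^ 2 := by
    rw [← ha, real_inner_smul_right, real_inner_self_eq_norm_sq]
  have hm2 : (0:ℝ) < ‖m‖ ^ 2 := by
    have := norm_pos_iff.2 hm
    positivity
  by_contra ha0
  push_neg at ha0
  have : a * ‖m‖ ^ 2 ≤ 0 := mul_nonpos_of_nonpos_of_nonneg ha0 hm2.le
  rw [← hval] at this
  linarith
end
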